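/- Let u : [0,T] → ℂ solve u''(t) + a(t)R²u(t) = 0 with a measurable, λ₀ ≤ a ≤ Λ₀, λ₀ > 0, R ≥ 1. Let b : [0,T] → ℝ be C¹ with λ₀ ≤ b ≤ Λ₀, and define the approximate energy E(t) = b(t)R²|u(t)|² + |u'(t)|². Then E'(t) ≤ ( |b'(t)|/b(t) + R·|b(t) − a(t)|/b(t)^{1/2} )·E(t) for a.e. t ∈ [0,T]. -/

import Mathlib

open Real MeasureTheory

lemma hasDerivAt_abs_sq' {u : ℝ → ℂ} {v : ℂ} {t : ℝ} (hu : HasDerivAt u v t) :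
    HasDerivAt (fun s => ‖u s‖ ^ 2) (2 * (v * (starRingEnd ℂ) (u t)).re) t := by
  have hre : HasDerivAt (fun s => (u s).re) v.re t :=
    (Complex.reCLM.hasFDerivAt.comp_hasDerivAt t hu)
  have him : HasDerivAt (fun s => (u s).im) v.im t :=
    (Complex.imCLM.hasFDerivAt.comp_hasDerivAt t hu)
  have h := (hre.mul hre).add (him.mul him)
  have hfun : (fun s => ‖u s‖ ^ 2)
      = fun s => (u s).re * (u s).re + (u s).im * (u s).im := by
    funext s
    rw [Complex.sq_norm, Complex.normSq_apply]
  rw [hfun]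
  refine h.congr_deriv ?_
  simp [Complex.mul_re, Complex.conj_re, Complex.conj_im]
  ring

theorem approximate_energy_inequality (T R lam Lam : ℝ) (hT : 0 < T) (hR : 1 ≤ R)
    (hlam : 0 < lam) (hlamLam : lam ≤ Lam)
    (a b b' : ℝ → ℝ) (u u' u'' : ℝ → ℂ)
    (hameas : Measurable a)
    (ha : ∀ t ∈ Set.Icc (0:ℝ) T, lam ≤ a t ∧ a t ≤ Lam)
    (hb : ∀ t ∈ Set.Icc (0:ℝ) T, lam ≤ b t ∧ b t ≤ Lam)
    (hb' : ∀ t ∈ Set.Icc (0:ℝ) T, HasDerivAt b (b' t) t)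
    (hb'cont : ContinuousOn b' (Set.Icc 0 T))
    (hu' : ∀ t ∈ Set.Icc (0:ℝ) T, HasDerivAt u (u' t) t)
    (hu'' : ∀ᵐ t ∂(volume.restrict (Set.Icc (0:ℝ) T)), HasDerivAt u' (u'' t) t)
    (hODE : ∀ᵐ t ∂(volume.restrict (Set.Icc (0:ℝ) T)),
      u'' t + (a t * R ^ 2 : ℝ) * u t = 0)
    (E : ℝ → ℝ)
    (hE : ∀ t, E t = b t * R ^ 2 * ‖u t‖ ^ 2 + ‖u' t‖ ^ 2) :
    ∀ᵐ t ∂(volume.restrict (Set.Icc (0:ℝ) T)),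
      deriv E t ≤ (|b' t| / b t + R * |b t - a t| / Real.sqrt (b t)) * E t := by
  have hmem : ∀ᵐ t ∂(volume.restrict (Set.Icc (0:ℝ) T)), t ∈ Set.Icc (0:ℝ) T :=
    ae_restrict_mem measurableSet_Icc
  filter_upwards [hu'', hODE, hmem] with t hu''t hODEt htmem
  -- notation
  set N := ‖u t‖ ^ 2 with hN
  set M := ‖u' t‖ ^ 2 with hM
  set P := (u' t * (starRingEnd ℂ) (u t)).re with hP
  have hBpos : 0 < b t := lt_of_lt_of_le hlam (hb t htmem).1
  have hspos : 0 < Real.sqrt (b t) := Real.sqrt_pos.mpr hBpos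
  have hs2 : Real.sqrt (b t) ^ 2 = b t := Real.sq_sqrt hBpos.le
  have hR0 : (0:ℝ) < R := lt_of_lt_of_le one_pos hR
  -- derivative of E
  have hdN : HasDerivAt (fun s => ‖u s‖ ^ 2) (2 * P) t :=
    hasDerivAt_abs_sq' (hu' t htmem)
  have hdM : HasDerivAt (fun s => ‖u' s‖ ^ 2)
      (2 * (u'' t * (starRingEnd ℂ) (u' t)).re) t := hasDerivAt_abs_sq' hu''t
  have hdE : HasDerivAt E
      ((b' t * (‖u t‖ ^ 2) + b t * (2 * P)) * R ^ 2
        + 2 * (u'' t * (starRingEnd ℂ) (u' t)).re) t := by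
    have hEfun : E = fun s => (b s * ‖u s‖ ^ 2) * R ^ 2
        + ‖u' s‖ ^ 2 := by
      funext s; rw [hE s]; ring
    rw [hEfun]
    exact (((hb' t htmem).mul hdN).mul_const (R ^ 2)).add hdM
  -- the ODE
  have hODE' : u'' t = -((a t * R ^ 2 : ℝ) * u t) :=
    eq_neg_of_add_eq_zero_left hODEt
  have hQ : (u'' t * (starRingEnd ℂ) (u' t)).re = -(a t * R ^ 2) * P := by
    rw [hODE']
    simp only [hP, Complex.mul_re, Complex.neg_re, Complex.neg_im, Complex.mul_im,
      Complex.conj_re, Complex.conj_im, Complex.ofReal_re, Complex.ofReal_im]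
    ring
  have hDeriv : deriv E t = b' t * R ^ 2 * N + 2 * R ^ 2 * (b t - a t) * P := by
    rw [hdE.deriv, hQ]; ring
  rw [hDeriv, hE t]
  -- bounds
  have hPabs : |P| ≤ ‖u t‖ * ‖u' t‖ := by
    calc |P| ≤ ‖u' t * (starRingEnd ℂ) (u t)‖ := Complex.abs_re_le_norm _
      _ = ‖u t‖ * ‖u' t‖ := by
          rw [norm_mul, Complex.norm_conj]; ring
  have hx0 : 0 ≤ ‖u t‖ := norm_nonneg _
  have hy0 : 0 ≤ ‖u' t‖ := norm_nonneg _
  have habs0 : (0:ℝ) ≤ |b t - a t| := abs_nonneg _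
  have piece1 : b' t * R ^ 2 * N
      ≤ |b' t| / b t * (b t * R ^ 2 * N + M) := by
    have h1 : b' t * R ^ 2 * N ≤ |b' t| * R ^ 2 * N := by
      have : b' t ≤ |b' t| := le_abs_self _
      have hRN : 0 ≤ R ^ 2 * N := by positivity
      nlinarith
    have h2 : |b' t| * R ^ 2 * N = |b' t| / b t * (b t * R ^ 2 * N) := by
      field_simp
    have h3 : |b' t| / b t * (b t * R ^ 2 * N) ≤ |b' t| / b t * (b t * R ^ 2 * N + M) := by
      have : (0:ℝ) ≤ |b' t| / b t := by positivity
      have : (0:ℝ) ≤ M := by positivity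
      nlinarith [div_nonneg (abs_nonneg (b' t)) hBpos.le]
    linarith
  have piece2 : 2 * R ^ 2 * (b t - a t) * P
      ≤ R * |b t - a t| / Real.sqrt (b t) * (b t * R ^ 2 * N + M) := by
    rw [div_mul_eq_mul_div, le_div_iff₀ hspos]
    have h1 : (b t - a t) * P ≤ |b t - a t| * (‖u t‖ * ‖u' t‖) := by
      calc (b t - a t) * P ≤ |(b t - a t) * P| := le_abs_self _
        _ = |b t - a t| * |P| := abs_mul _ _
        _ ≤ |b t - a t| * (‖u t‖ * ‖u' t‖) :=
            mul_le_mul_of_nonneg_left hPabs habs0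
    have h2 : 2 * R ^ 2 * (b t - a t) * P * Real.sqrt (b t)
        ≤ 2 * R ^ 2 * |b t - a t| * (‖u t‖ * ‖u' t‖)
          * Real.sqrt (b t) := by
      have hc : (0:ℝ) ≤ 2 * R ^ 2 * Real.sqrt (b t) := by positivity
      nlinarith [mul_le_mul_of_nonneg_left h1 hc]
    refine h2.trans ?_
    set z := Real.sqrt (b t) * R * ‖u t‖ with hz
    have hz2 : z ^ 2 = b t * R ^ 2 * N := by
      calc z ^ 2 = Real.sqrt (b t) ^ 2 * R ^ 2 * ‖u t‖ ^ 2 := by rw [hz]; ring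
        _ = b t * R ^ 2 * N := by rw [hs2, hN]
    have hkey : R * |b t - a t| * (2 * z * ‖u' t‖)
        ≤ R * |b t - a t| * (z ^ 2 + ‖u' t‖ ^ 2) :=
      mul_le_mul_of_nonneg_left (two_mul_le_add_sq z _) (by positivity)
    calc 2 * R ^ 2 * |b t - a t| * (‖u t‖ * ‖u' t‖) * Real.sqrt (b t)
        = R * |b t - a t| * (2 * z * ‖u' t‖) := by rw [hz]; ring
      _ ≤ R * |b t - a t| * (z ^ 2 + ‖u' t‖ ^ 2) := hkey
      _ = R * |b t - a t| * (b t * R ^ 2 * N + M) := by rw [hz2, hM]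
  rw [← hN, ← hM]
  linarith
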